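/- Let X, X̃, Y be as in the model-free knockoff setting and let S ⊆ H_0 be any subset of null variables (j ∈ H_0 iff Y ⫫ X_j | X_{-j}). Then ((X, X̃)_{swap(S)}, Y) =_d ((X, X̃), Y). -/

import Mathlib

open MeasureTheory ProbabilityTheory
open scoped ENNReal

/-- The swap operation: exchange the coordinate `inl j` (original) with `inr j` (knockoff)
for each `j ∈ S`. -/
def knockoffSwap {p : ℕ} (S : Finset (Fin p)) (v : (Fin p ⊕ Fin p) → ℝ) :
    (Fin p ⊕ Fin p) → ℝ :=
  Sum.elim (fun j => if j ∈ S then v (Sum.inr j) else v (Sum.inl j))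
    (fun j => if j ∈ S then v (Sum.inl j) else v (Sum.inr j))

section AuxKnockoff

lemma knockoffSwap_empty {p : ℕ} (v : (Fin p ⊕ Fin p) → ℝ) : knockoffSwap ∅ v = v := by
  funext c; rcases c with i | i <;> simp [knockoffSwap]

lemma knockoffSwap_insert {p : ℕ} {j : Fin p} {S : Finset (Fin p)} (hj : j ∉ S)
    (v : (Fin p ⊕ Fin p) → ℝ) :
    knockoffSwap (insert j S) v = knockoffSwap {j} (knockoffSwap S v) := by
  funext c
  rcases c with i | i <;>
    · simp only [knockoffSwap, Sum.elim_inl, Sum.elim_inr, Finset.mem_insert,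
        Finset.mem_singleton]
      by_cases hij : i = j
      · subst hij; simp [hj]
      · simp [hij]

lemma measurable_knockoffSwap {p : ℕ} (S : Finset (Fin p)) :
    Measurable (knockoffSwap S) := by
  rw [measurable_pi_iff]
  rintro (i | i) <;>
    · simp only [knockoffSwap, Sum.elim_inl, Sum.elim_inr]
      split_ifs <;> exact measurable_pi_apply _

end AuxKnockoff

section AuxTower

/-- Tower property coming from conditional independence: if `W ⫫ Y | m'`, then conditioning
an indicator of `Y` on `m' ⊔ σ(W)` is the same as conditioning on `m'`. -/
lemma condexp_indicator_sup_comap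
    {Ω β γ : Type*} {m' : MeasurableSpace Ω} [mΩ : MeasurableSpace Ω]
    [StandardBorelSpace Ω] [Nonempty Ω]
    {μ : Measure Ω} [IsFiniteMeasure μ]
    [mβ : MeasurableSpace β] [mγ : MeasurableSpace γ]
    (hm' : m' ≤ mΩ)
    {W : Ω → β} {Y : Ω → γ} (hW : Measurable W) (hY : Measurable Y)
    (h : CondIndepFun m' hm' W Y μ) {B : Set γ} (hB : MeasurableSet B) :
    (μ⟦Y ⁻¹' B | m' ⊔ MeasurableSpace.comap W mβ⟧) =ᵐ[μ] μ⟦Y ⁻¹' B | m'⟧ := by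
  have hm : m' ⊔ MeasurableSpace.comap W mβ ≤ mΩ := sup_le hm' hW.comap_le
  haveI : IsFiniteMeasure (μ.trim hm) := isFiniteMeasure_trim hm
  haveI : IsFiniteMeasure (μ.trim hm') := isFiniteMeasure_trim hm'
  have hYB : MeasurableSet (Y ⁻¹' B) := hY hB
  have hf_int : Integrable ((Y ⁻¹' B).indicator fun _ => (1 : ℝ)) μ :=
    (integrable_const (1 : ℝ)).indicator hYB
  have hkey : ∀ s : Set Ω, MeasurableSet[m' ⊔ MeasurableSpace.comap W mβ] s →
      ∫ x in s, (μ[(Y ⁻¹' B).indicator (fun _ => (1 : ℝ)) | m']) x ∂μ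
        = ∫ x in s, (Y ⁻¹' B).indicator (fun _ => (1 : ℝ)) x ∂μ := by
    have hgen : (m' ⊔ MeasurableSpace.comap W mβ) = MeasurableSpace.generateFrom
        {u : Set Ω | ∃ s t, MeasurableSet[m'] s ∧ MeasurableSet t ∧ u = s ∩ W ⁻¹' t} := by
      refine le_antisymm (sup_le ?_ ?_) (MeasurableSpace.generateFrom_le ?_)
      · intro s hs
        exact MeasurableSpace.measurableSet_generateFrom
          ⟨s, Set.univ, hs, MeasurableSet.univ, by simp⟩
      · rintro u ⟨t, ht, rfl⟩
        exact MeasurableSpace.measurableSet_generateFrom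
          ⟨Set.univ, t, MeasurableSet.univ, ht, by simp⟩
      · rintro u ⟨s, t, hs, ht, rfl⟩
        exact MeasurableSet.inter
          ((le_sup_left : m' ≤ m' ⊔ MeasurableSpace.comap W mβ) s hs)
          ((le_sup_right : MeasurableSpace.comap W mβ ≤ m' ⊔ MeasurableSpace.comap W mβ)
            _ ⟨t, ht, rfl⟩)
    have hpi : IsPiSystem
        {u : Set Ω | ∃ s t, MeasurableSet[m'] s ∧ MeasurableSet t ∧ u = s ∩ W ⁻¹' t} := by
      rintro u1 ⟨s1, t1, hs1, ht1, rfl⟩ u2 ⟨s2, t2, hs2, ht2, rfl⟩ -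
      refine ⟨s1 ∩ s2, t1 ∩ t2, hs1.inter hs2, ht1.inter ht2, ?_⟩
      ext x
      simp only [Set.mem_inter_iff, Set.mem_preimage, Set.mem_inter_iff]
      tauto
    intro s hs
    refine MeasurableSpace.induction_on_inter (m := m' ⊔ MeasurableSpace.comap W mβ)
      (C := fun u _ => ∫ x in u, (μ[(Y ⁻¹' B).indicator (fun _ => (1 : ℝ)) | m']) x ∂μ
        = ∫ x in u, (Y ⁻¹' B).indicator (fun _ => (1 : ℝ)) x ∂μ)
      hgen hpi (by simp) ?_ ?_ ?_ _ hs
    · rintro u ⟨s', t, hs', ht, rfl⟩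
      have hs0 : MeasurableSet s' := hm' s' hs'
      have hWt : MeasurableSet (W ⁻¹' t) := hW ht
      have hF_int : Integrable
          ((W ⁻¹' t).indicator (μ[(Y ⁻¹' B).indicator (fun _ => (1 : ℝ)) | m'])) μ :=
        integrable_condExp.indicator hWt
      have hI_int : Integrable ((W ⁻¹' t).indicator fun _ => (1 : ℝ)) μ :=
        (integrable_const (1 : ℝ)).indicator hWt
      have hGI : (W ⁻¹' t).indicator (μ[(Y ⁻¹' B).indicator (fun _ => (1 : ℝ)) | m'])
          = (μ[(Y ⁻¹' B).indicator (fun _ => (1 : ℝ)) | m'])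
            * (W ⁻¹' t).indicator (fun _ => (1 : ℝ)) := by
        funext x
        by_cases hx : x ∈ W ⁻¹' t <;> simp [hx]
      have hmul : (μ[(W ⁻¹' t).indicator (μ[(Y ⁻¹' B).indicator (fun _ => (1 : ℝ)) | m']) | m'])
          =ᵐ[μ] (μ[(Y ⁻¹' B).indicator (fun _ => (1 : ℝ)) | m'])
            * (μ[(W ⁻¹' t).indicator (fun _ => (1 : ℝ)) | m']) := by
        rw [hGI]
        exact condExp_mul_of_stronglyMeasurable_left stronglyMeasurable_condExp
          (hGI ▸ hF_int) hI_int
      have hprod := (condIndepFun_iff_condExp_inter_preimage_eq_mul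
        (μ := μ) (hm' := hm') hW hY).mp h t B ht hB
      have hfinal : (μ[(W ⁻¹' t).indicator (μ[(Y ⁻¹' B).indicator (fun _ => (1 : ℝ)) | m']) | m'])
          =ᵐ[μ] μ[(W ⁻¹' t ∩ Y ⁻¹' B).indicator (fun _ => (1 : ℝ)) | m'] := by
        filter_upwards [hmul, hprod] with ω h1 h2
        rw [h1, Pi.mul_apply, h2, mul_comm]
      calc ∫ x in s' ∩ W ⁻¹' t, (μ[(Y ⁻¹' B).indicator (fun _ => (1 : ℝ)) | m']) x ∂μ
          = ∫ x in s', (W ⁻¹' t).indicator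
              (μ[(Y ⁻¹' B).indicator (fun _ => (1 : ℝ)) | m']) x ∂μ :=
            (setIntegral_indicator hWt).symm
        _ = ∫ x in s', (μ[(W ⁻¹' t).indicator
              (μ[(Y ⁻¹' B).indicator (fun _ => (1 : ℝ)) | m']) | m']) x ∂μ :=
            (setIntegral_condExp hm' hF_int hs').symm
        _ = ∫ x in s', (μ[(W ⁻¹' t ∩ Y ⁻¹' B).indicator (fun _ => (1 : ℝ)) | m']) x ∂μ :=
            setIntegral_congr_ae hs0 (hfinal.mono fun x hx _ => hx)
        _ = ∫ x in s', (W ⁻¹' t ∩ Y ⁻¹' B).indicator (fun _ => (1 : ℝ)) x ∂μ :=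
            setIntegral_condExp hm' ((integrable_const 1).indicator (hWt.inter hYB)) hs'
        _ = (μ (s' ∩ (W ⁻¹' t ∩ Y ⁻¹' B))).toReal := by
            rw [setIntegral_indicator (hWt.inter hYB), setIntegral_const, smul_eq_mul, mul_one,
              measureReal_def]
        _ = ∫ x in s' ∩ W ⁻¹' t, (Y ⁻¹' B).indicator (fun _ => (1 : ℝ)) x ∂μ := by
            rw [setIntegral_indicator hYB, setIntegral_const, smul_eq_mul, mul_one,
              Set.inter_assoc, measureReal_def]
    · intro u hu hCu
      rw [setIntegral_compl (hm u hu) integrable_condExp,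
        setIntegral_compl (hm u hu) hf_int, hCu]
      congr 1
      exact integral_condExp hm'
    · intro g hd hgm hC
      rw [integral_iUnion (fun i => hm _ (hgm i)) hd integrable_condExp.integrableOn,
        integral_iUnion (fun i => hm _ (hgm i)) hd hf_int.integrableOn]
      exact tsum_congr hC
  exact (ae_eq_condExp_of_forall_setIntegral_eq hm hf_int
    (fun s _ _ => integrable_condExp.integrableOn)
    (fun s hs _ => hkey s hs)
    (StronglyMeasurable.aestronglyMeasurable (stronglyMeasurable_condExp.mono le_sup_left))).symm

end AuxTower

section AuxLintegral

open MeasureTheory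

/-- If the law of `Z` is invariant under `T` and `G` is measurable with respect to a
functional `π ∘ Z` that is itself invariant under `T`, then the joint integral is invariant. -/
lemma lintegral_indicator_mul_swap
    {Ω E D : Type*} [MeasurableSpace Ω] [MeasurableSpace E] [MeasurableSpace D]
    {μ : Measure Ω} {Z : Ω → E} (hZ : Measurable Z)
    {T : E → E} (hT : Measurable T) {π : E → D} (hπ : Measurable π)
    (hπT : ∀ w, π (T w) = π w)
    (hmap : μ.map (fun ω => T (Z ω)) = μ.map Z)
    {A : Set E} (hA : MeasurableSet A)
    {G : Ω → ℝ≥0∞}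
    (hG : Measurable[MeasurableSpace.comap (fun ω => π (Z ω)) inferInstance] G) :
    ∫⁻ ω, A.indicator (fun _ => (1 : ℝ≥0∞)) (T (Z ω)) * G ω ∂μ
      = ∫⁻ ω, A.indicator (fun _ => (1 : ℝ≥0∞)) (Z ω) * G ω ∂μ := by
  have hcle : MeasurableSpace.comap (fun ω => π (Z ω)) inferInstance ≤ ‹MeasurableSpace Ω› :=
    Measurable.comap_le (hπ.comp hZ)
  refine @Measurable.ennreal_induction Ω
    (MeasurableSpace.comap (fun ω => π (Z ω)) inferInstance)
    (fun G => ∫⁻ ω, A.indicator (fun _ => (1 : ℝ≥0∞)) (T (Z ω)) * G ω ∂μ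
      = ∫⁻ ω, A.indicator (fun _ => (1 : ℝ≥0∞)) (Z ω) * G ω ∂μ) ?_ ?_ ?_ G hG
  · intro c s hs
    obtain ⟨t, ht, rfl⟩ := hs
    have key : ∀ g : Ω → E, (∀ ω, π (g ω) = π (Z ω)) →
        (fun ω => A.indicator (fun _ => (1 : ℝ≥0∞)) (g ω)
          * ((fun ω => π (Z ω)) ⁻¹' t).indicator (fun _ => c) ω)
        = fun ω => (A ∩ π ⁻¹' t).indicator (fun _ => c) (g ω) := by
      intro g hg
      funext ω
      by_cases h1 : g ω ∈ A <;> by_cases h2 : π (Z ω) ∈ t <;>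
        simp [Set.indicator_apply, h1, h2, hg ω]
    have hAt : MeasurableSet (A ∩ π ⁻¹' t) := hA.inter (hπ ht)
    have hind : Measurable ((A ∩ π ⁻¹' t).indicator (fun _ => c)) :=
      measurable_const.indicator hAt
    calc ∫⁻ ω, A.indicator (fun _ => (1 : ℝ≥0∞)) (T (Z ω))
          * ((fun ω => π (Z ω)) ⁻¹' t).indicator (fun _ => c) ω ∂μ
        = ∫⁻ ω, (A ∩ π ⁻¹' t).indicator (fun _ => c) (T (Z ω)) ∂μ := by
          rw [key (fun ω => T (Z ω)) (fun ω => hπT (Z ω))]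
      _ = ∫⁻ w, (A ∩ π ⁻¹' t).indicator (fun _ => c) w ∂(μ.map (fun ω => T (Z ω))) :=
          (lintegral_map hind (hT.comp hZ)).symm
      _ = ∫⁻ w, (A ∩ π ⁻¹' t).indicator (fun _ => c) w ∂(μ.map Z) := by rw [hmap]
      _ = ∫⁻ ω, (A ∩ π ⁻¹' t).indicator (fun _ => c) (Z ω) ∂μ := lintegral_map hind hZ
      _ = ∫⁻ ω, A.indicator (fun _ => (1 : ℝ≥0∞)) (Z ω)
            * ((fun ω => π (Z ω)) ⁻¹' t).indicator (fun _ => c) ω ∂μ := by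
          rw [key Z (fun _ => rfl)]
  · intro f g _ hf hg hPf hPg
    have h1 : Measurable fun ω => A.indicator (fun _ => (1 : ℝ≥0∞)) (T (Z ω)) * f ω :=
      ((measurable_const.indicator hA).comp (hT.comp hZ)).mul (hf.mono hcle le_rfl)
    have h2 : Measurable fun ω => A.indicator (fun _ => (1 : ℝ≥0∞)) (Z ω) * f ω :=
      ((measurable_const.indicator hA).comp hZ).mul (hf.mono hcle le_rfl)
    simp only [Pi.add_apply, mul_add]
    rw [lintegral_add_left h1, lintegral_add_left h2, hPf, hPg]
  · intro f hfm hfmono hPf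
    simp only [ENNReal.mul_iSup]
    rw [lintegral_iSup, lintegral_iSup]
    · exact iSup_congr hPf
    · exact fun n => ((measurable_const.indicator hA).comp hZ).mul ((hfm n).mono hcle le_rfl)
    · intro a b hab ω
      exact mul_le_mul_right (hfmono hab ω) _
    · exact fun n => ((measurable_const.indicator hA).comp (hT.comp hZ)).mul
        ((hfm n).mono hcle le_rfl)
    · intro a b hab ω
      exact mul_le_mul_right (hfmono hab ω) _

end AuxLintegral

/-- Lemma 3.2: if `X̃` is a model-free knockoff for `X` and `S` is any subset of null variables
(`j ∈ S ⇒ Y ⫫ X_j | X_{-j}`), then `((X, X̃)_{swap(S)}, Y) =_d ((X, X̃), Y)`. -/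
theorem null_swap_exchangeable
    {Ω : Type*} [MeasurableSpace Ω] [StandardBorelSpace Ω] [Nonempty Ω]
    {μ : Measure Ω} [IsProbabilityMeasure μ]
    {p : ℕ} (X Xt : Ω → Fin p → ℝ) (Y : Ω → ℝ)
    (hX : Measurable X) (hXt : Measurable Xt) (hY : Measurable Y)
    (hexch : ∀ S' : Finset (Fin p),
      μ.map (fun ω => knockoffSwap S' (Sum.elim (X ω) (Xt ω)))
        = μ.map (fun ω => Sum.elim (X ω) (Xt ω)))
    (hCI : CondIndepFun (MeasurableSpace.comap X inferInstance) hX.comap_le Xt Y μ)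
    (hXmj : ∀ j : Fin p, Measurable fun ω => fun i : {i : Fin p // i ≠ j} => X ω i.1)
    (S : Finset (Fin p))
    (hSnull : ∀ j ∈ S, CondIndepFun
      (MeasurableSpace.comap (fun ω => fun i : {i : Fin p // i ≠ j} => X ω i.1) inferInstance)
      (hXmj j).comap_le Y (fun ω => X ω j) μ) :
    μ.map (fun ω => (knockoffSwap S (Sum.elim (X ω) (Xt ω)), Y ω))
      = μ.map (fun ω => (Sum.elim (X ω) (Xt ω), Y ω)) := by
  classical
  have hZ : Measurable fun ω => Sum.elim (X ω) (Xt ω) := by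
    rw [measurable_pi_iff]
    rintro (i | i)
    · exact (measurable_pi_apply i).comp hX
    · exact (measurable_pi_apply i).comp hXt
  -- σ-algebra identities
  have hcomapZ : MeasurableSpace.comap (fun ω => Sum.elim (X ω) (Xt ω)) inferInstance
      = MeasurableSpace.comap X inferInstance ⊔ MeasurableSpace.comap Xt inferInstance := by
    refine le_antisymm ?_ (sup_le ?_ ?_)
    · refine Measurable.comap_le ((@measurable_pi_iff Ω _ _
        (MeasurableSpace.comap X inferInstance ⊔ MeasurableSpace.comap Xt inferInstance)
        _ _).mpr ?_)
      rintro (i | i)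
      · exact ((measurable_pi_apply i).comp (comap_measurable X)).mono
          le_sup_left le_rfl
      · exact ((measurable_pi_apply i).comp (comap_measurable Xt)).mono
          le_sup_right le_rfl
    · have h1 : X = (fun w : (Fin p ⊕ Fin p) → ℝ => fun i => w (Sum.inl i))
          ∘ (fun ω => Sum.elim (X ω) (Xt ω)) := rfl
      rw [h1, ← MeasurableSpace.comap_comp]
      exact MeasurableSpace.comap_mono
        ((measurable_pi_lambda _ fun i => measurable_pi_apply (Sum.inl i)).comap_le)
    · have h2 : Xt = (fun w : (Fin p ⊕ Fin p) → ℝ => fun i => w (Sum.inr i))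
          ∘ (fun ω => Sum.elim (X ω) (Xt ω)) := rfl
      rw [h2, ← MeasurableSpace.comap_comp]
      exact MeasurableSpace.comap_mono
        ((measurable_pi_lambda _ fun i => measurable_pi_apply (Sum.inr i)).comap_le)
  have hcomapX : ∀ j : Fin p, MeasurableSpace.comap X inferInstance
      = MeasurableSpace.comap (fun ω => fun i : {i : Fin p // i ≠ j} => X ω i.1) inferInstance
        ⊔ MeasurableSpace.comap (fun ω => X ω j) inferInstance := by
    intro j
    refine le_antisymm ?_ (sup_le ?_ ?_)
    · refine Measurable.comap_le ((@measurable_pi_iff Ω _ _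
        (MeasurableSpace.comap (fun ω => fun i : {i : Fin p // i ≠ j} => X ω i.1) inferInstance
          ⊔ MeasurableSpace.comap (fun ω => X ω j) inferInstance)
        _ _).mpr ?_)
      intro i
      by_cases hij : i = j
      · subst hij
        exact (comap_measurable (fun ω => X ω i)).mono le_sup_right le_rfl
      · exact ((measurable_pi_apply (⟨i, hij⟩ : {i : Fin p // i ≠ j})).comp
          (comap_measurable
            (fun ω => fun i : {i : Fin p // i ≠ j} => X ω i.1))).mono le_sup_left le_rfl
    · have h1 : (fun ω => fun i : {i : Fin p // i ≠ j} => X ω i.1)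
          = (fun w : Fin p → ℝ => fun i : {i : Fin p // i ≠ j} => w i.1) ∘ X := rfl
      rw [h1, ← MeasurableSpace.comap_comp]
      exact MeasurableSpace.comap_mono
        ((measurable_pi_lambda _ fun i => measurable_pi_apply i.1).comap_le)
    · have h2 : (fun ω => X ω j) = (fun w : Fin p → ℝ => w j) ∘ X := rfl
      rw [h2, ← MeasurableSpace.comap_comp]
      exact MeasurableSpace.comap_mono ((measurable_pi_apply j).comap_le)
  have hmZ : MeasurableSpace.comap (fun ω => Sum.elim (X ω) (Xt ω)) inferInstance
      ≤ ‹MeasurableSpace Ω› := hZ.comap_le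
  haveI : IsFiniteMeasure (μ.trim hmZ) := isFiniteMeasure_trim hmZ
  -- the single swap lemma
  have single : ∀ j : Fin p,
      CondIndepFun
        (MeasurableSpace.comap (fun ω => fun i : {i : Fin p // i ≠ j} => X ω i.1) inferInstance)
        (hXmj j).comap_le Y (fun ω => X ω j) μ →
      μ.map (fun ω => (knockoffSwap {j} (Sum.elim (X ω) (Xt ω)), Y ω))
        = μ.map (fun ω => (Sum.elim (X ω) (Xt ω), Y ω)) := by
    intro j hnull
    have hXj : Measurable fun ω => X ω j := (measurable_pi_apply j).comp hX
    have hmj : MeasurableSpace.comap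
        (fun ω => fun i : {i : Fin p // i ≠ j} => X ω i.1) inferInstance
        ≤ ‹MeasurableSpace Ω› := (hXmj j).comap_le
    haveI : IsFiniteMeasure (μ.trim hmj) := isFiniteMeasure_trim hmj
    -- key conditional expectation identity
    have key : ∀ B : Set ℝ, MeasurableSet B →
        (μ⟦Y ⁻¹' B | MeasurableSpace.comap (fun ω => Sum.elim (X ω) (Xt ω)) inferInstance⟧)
          =ᵐ[μ] μ⟦Y ⁻¹' B | MeasurableSpace.comap
            (fun ω => fun i : {i : Fin p // i ≠ j} => X ω i.1) inferInstance⟧ := by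
      intro B hB
      rw [hcomapZ]
      refine (condexp_indicator_sup_comap hX.comap_le hXt hY hCI hB).trans ?_
      rw [hcomapX j]
      exact condexp_indicator_sup_comap (hXmj j).comap_le hXj hY hnull.symm hB
    -- measurability of the swap composition
    have hTZ : Measurable fun ω => knockoffSwap {j} (Sum.elim (X ω) (Xt ω)) :=
      (measurable_knockoffSwap {j}).comp hZ
    haveI : IsProbabilityMeasure
        (μ.map (fun ω => (knockoffSwap {j} (Sum.elim (X ω) (Xt ω)), Y ω))) :=
      Measure.isProbabilityMeasure_map (hTZ.prodMk hY).aemeasurable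
    haveI : IsProbabilityMeasure (μ.map (fun ω => (Sum.elim (X ω) (Xt ω), Y ω))) :=
      Measure.isProbabilityMeasure_map (hZ.prodMk hY).aemeasurable
    refine ext_of_generate_finite _ generateFrom_prod.symm isPiSystem_prod ?_ (by simp)
    rintro u ⟨A, hA, B, hB, rfl⟩
    simp only [Set.mem_setOf_eq] at hA hB
    rw [Measure.map_apply (hTZ.prodMk hY) (hA.prod hB),
      Measure.map_apply (hZ.prodMk hY) (hA.prod hB)]
    have hpre1 : (fun ω => (knockoffSwap {j} (Sum.elim (X ω) (Xt ω)), Y ω)) ⁻¹' (A ×ˢ B)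
        = (fun ω => knockoffSwap {j} (Sum.elim (X ω) (Xt ω))) ⁻¹' A ∩ Y ⁻¹' B := by
      ext ω; simp
    have hpre2 : (fun ω => (Sum.elim (X ω) (Xt ω), Y ω)) ⁻¹' (A ×ˢ B)
        = (fun ω => Sum.elim (X ω) (Xt ω)) ⁻¹' A ∩ Y ⁻¹' B := by
      ext ω; simp
    rw [hpre1, hpre2]
    -- now compare the two measures via conditional expectations
    have hG0nn : (0 : Ω → ℝ) ≤ᵐ[μ] μ⟦Y ⁻¹' B | MeasurableSpace.comap
        (fun ω => fun i : {i : Fin p // i ≠ j} => X ω i.1) inferInstance⟧ :=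
      condExp_nonneg (Filter.Eventually.of_forall fun ω =>
        Set.indicator_apply_nonneg fun _ => zero_le_one)
    have hf_int : Integrable ((Y ⁻¹' B).indicator fun _ => (1 : ℝ)) μ :=
      (integrable_const (1 : ℝ)).indicator (hY hB)
    have hident : ∀ A' : Set ((Fin p ⊕ Fin p) → ℝ), MeasurableSet A' →
        (μ ((fun ω => Sum.elim (X ω) (Xt ω)) ⁻¹' A' ∩ Y ⁻¹' B)).toReal
          = (∫⁻ ω, A'.indicator (fun _ => (1 : ℝ≥0∞)) (Sum.elim (X ω) (Xt ω))
              * ENNReal.ofReal ((μ⟦Y ⁻¹' B | MeasurableSpace.comap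
                (fun ω => fun i : {i : Fin p // i ≠ j} => X ω i.1) inferInstance⟧) ω) ∂μ).toReal := by
      intro A' hA'
      have hsZ : MeasurableSet[MeasurableSpace.comap
          (fun ω => Sum.elim (X ω) (Xt ω)) inferInstance]
          ((fun ω => Sum.elim (X ω) (Xt ω)) ⁻¹' A') := ⟨A', hA', rfl⟩
      have hsm : MeasurableSet ((fun ω => Sum.elim (X ω) (Xt ω)) ⁻¹' A') := hZ hA'
      have e1 : (μ ((fun ω => Sum.elim (X ω) (Xt ω)) ⁻¹' A' ∩ Y ⁻¹' B)).toReal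
          = ∫ x in (fun ω => Sum.elim (X ω) (Xt ω)) ⁻¹' A',
              (Y ⁻¹' B).indicator (fun _ => (1 : ℝ)) x ∂μ := by
        rw [setIntegral_indicator (hY hB), setIntegral_const, smul_eq_mul, mul_one, measureReal_def]
      have e2 : ∫ x in (fun ω => Sum.elim (X ω) (Xt ω)) ⁻¹' A',
            (Y ⁻¹' B).indicator (fun _ => (1 : ℝ)) x ∂μ
          = ∫ x in (fun ω => Sum.elim (X ω) (Xt ω)) ⁻¹' A',
              (μ⟦Y ⁻¹' B | MeasurableSpace.comap
                (fun ω => fun i : {i : Fin p // i ≠ j} => X ω i.1) inferInstance⟧) x ∂μ := by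
        rw [← setIntegral_condExp hmZ hf_int hsZ]
        exact setIntegral_congr_ae hsm ((key B hB).mono fun x hx _ => hx)
      have e3 : ∫ x in (fun ω => Sum.elim (X ω) (Xt ω)) ⁻¹' A',
            (μ⟦Y ⁻¹' B | MeasurableSpace.comap
              (fun ω => fun i : {i : Fin p // i ≠ j} => X ω i.1) inferInstance⟧) x ∂μ
          = (∫⁻ x in (fun ω => Sum.elim (X ω) (Xt ω)) ⁻¹' A',
              ENNReal.ofReal ((μ⟦Y ⁻¹' B | MeasurableSpace.comap
                (fun ω => fun i : {i : Fin p // i ≠ j} => X ω i.1) inferInstance⟧) x) ∂μ).toReal :=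
        integral_eq_lintegral_of_nonneg_ae (ae_restrict_of_ae hG0nn)
          (stronglyMeasurable_condExp.mono hmj).aestronglyMeasurable
      have e4 : ∫⁻ x in (fun ω => Sum.elim (X ω) (Xt ω)) ⁻¹' A',
            ENNReal.ofReal ((μ⟦Y ⁻¹' B | MeasurableSpace.comap
              (fun ω => fun i : {i : Fin p // i ≠ j} => X ω i.1) inferInstance⟧) x) ∂μ
          = ∫⁻ ω, A'.indicator (fun _ => (1 : ℝ≥0∞)) (Sum.elim (X ω) (Xt ω))
              * ENNReal.ofReal ((μ⟦Y ⁻¹' B | MeasurableSpace.comap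
                (fun ω => fun i : {i : Fin p // i ≠ j} => X ω i.1) inferInstance⟧) ω) ∂μ := by
        rw [← lintegral_indicator hsm]
        congr 1
        funext ω
        by_cases hω : Sum.elim (X ω) (Xt ω) ∈ A' <;> simp [Set.indicator_apply, hω]
      rw [e1, e2, e3, e4]
    -- swap invariance of the lintegral
    have hG' : Measurable[MeasurableSpace.comap
        (fun ω => (fun w : (Fin p ⊕ Fin p) → ℝ => fun i : {i : Fin p // i ≠ j} => w (Sum.inl i.1))
          ((fun ω => Sum.elim (X ω) (Xt ω)) ω)) inferInstance]
        (fun ω => ENNReal.ofReal ((μ⟦Y ⁻¹' B | MeasurableSpace.comap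
          (fun ω => fun i : {i : Fin p // i ≠ j} => X ω i.1) inferInstance⟧) ω)) :=
      ENNReal.measurable_ofReal.comp stronglyMeasurable_condExp.measurable
    have hπ : Measurable
        (fun w : (Fin p ⊕ Fin p) → ℝ => fun i : {i : Fin p // i ≠ j} => w (Sum.inl i.1)) :=
      measurable_pi_lambda _ fun i => measurable_pi_apply (Sum.inl i.1)
    have hπT : ∀ w : (Fin p ⊕ Fin p) → ℝ,
        (fun i : {i : Fin p // i ≠ j} => knockoffSwap {j} w (Sum.inl i.1))
          = fun i : {i : Fin p // i ≠ j} => w (Sum.inl i.1) := by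
      intro w
      funext i
      simp [knockoffSwap, i.2]
    have hswap := lintegral_indicator_mul_swap hZ (measurable_knockoffSwap {j}) hπ hπT
      (hexch {j}) hA hG'
    -- conclude
    refine (ENNReal.toReal_eq_toReal_iff' (measure_ne_top μ _) (measure_ne_top μ _)).mp ?_
    calc (μ ((fun ω => knockoffSwap {j} (Sum.elim (X ω) (Xt ω))) ⁻¹' A ∩ Y ⁻¹' B)).toReal
        = (∫⁻ ω, (knockoffSwap {j} ⁻¹' A).indicator (fun _ => (1 : ℝ≥0∞))
              (Sum.elim (X ω) (Xt ω))
            * ENNReal.ofReal ((μ⟦Y ⁻¹' B | MeasurableSpace.comap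
              (fun ω => fun i : {i : Fin p // i ≠ j} => X ω i.1) inferInstance⟧) ω) ∂μ).toReal :=
          hident (knockoffSwap {j} ⁻¹' A) ((measurable_knockoffSwap {j}) hA)
      _ = (∫⁻ ω, A.indicator (fun _ => (1 : ℝ≥0∞)) (knockoffSwap {j} (Sum.elim (X ω) (Xt ω)))
            * ENNReal.ofReal ((μ⟦Y ⁻¹' B | MeasurableSpace.comap
              (fun ω => fun i : {i : Fin p // i ≠ j} => X ω i.1) inferInstance⟧) ω) ∂μ).toReal := by
          refine congrArg ENNReal.toReal (lintegral_congr fun ω => ?_)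
          by_cases hω : knockoffSwap {j} (Sum.elim (X ω) (Xt ω)) ∈ A <;>
            simp [Set.indicator_apply, hω]
      _ = (∫⁻ ω, A.indicator (fun _ => (1 : ℝ≥0∞)) (Sum.elim (X ω) (Xt ω))
            * ENNReal.ofReal ((μ⟦Y ⁻¹' B | MeasurableSpace.comap
              (fun ω => fun i : {i : Fin p // i ≠ j} => X ω i.1) inferInstance⟧) ω) ∂μ).toReal :=
          congrArg ENNReal.toReal hswap
      _ = (μ ((fun ω => Sum.elim (X ω) (Xt ω)) ⁻¹' A ∩ Y ⁻¹' B)).toReal :=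
          (hident A hA).symm
  -- induction over S
  revert hSnull
  refine Finset.induction_on S ?_ ?_
  · intro _
    have hid : (fun ω => (knockoffSwap ∅ (Sum.elim (X ω) (Xt ω)), Y ω))
        = fun ω => (Sum.elim (X ω) (Xt ω), Y ω) := by
      funext ω
      rw [knockoffSwap_empty]
    rw [hid]
  · intro j S' hjS IH hSnull
    have hS' := IH fun k hk => hSnull k (Finset.mem_insert_of_mem hk)
    have hj := hSnull j (Finset.mem_insert_self j S')
    have hstep : (fun ω => (knockoffSwap (insert j S') (Sum.elim (X ω) (Xt ω)), Y ω))
        = (fun q : ((Fin p ⊕ Fin p) → ℝ) × ℝ => (knockoffSwap {j} q.1, q.2))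
          ∘ (fun ω => (knockoffSwap S' (Sum.elim (X ω) (Xt ω)), Y ω)) := by
      funext ω
      simp [Function.comp, knockoffSwap_insert hjS]
    have hΦ : Measurable (fun q : ((Fin p ⊕ Fin p) → ℝ) × ℝ => (knockoffSwap {j} q.1, q.2)) :=
      ((measurable_knockoffSwap {j}).comp measurable_fst).prodMk measurable_snd
    have hWmeas : Measurable fun ω => (knockoffSwap S' (Sum.elim (X ω) (Xt ω)), Y ω) :=
      ((measurable_knockoffSwap S').comp hZ).prodMk hY
    have hZY : Measurable fun ω => (Sum.elim (X ω) (Xt ω), Y ω) := hZ.prodMk hY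
    rw [hstep, ← Measure.map_map hΦ hWmeas, hS', Measure.map_map hΦ hZY]
    exact single j hj
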